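/- Asymptotics of the moment matrix entries (Lemma 2.2 of the paper): Fix real numbers ã < b̃. For n ≥ 1 define a_n = √(2n)·(1 + ã·n^{−1/3}), b_n = √(2n)·(1 − b̃·n^{−1/3}), and u_n = a_n·b_n/2. Then lim_{n→∞} √(2π) · n^{1/6} · (n/e)^n · ∑_{j=0}^{∞} u_n^j/(n+j)! = 1/(b̃ − ã). -/

import Mathlib

open Filter Real MeasureTheory intervalIntegral Finset Topology

lemma summable_aux (u : ℝ) (n : ℕ) : Summable (fun j : ℕ => u ^ j / ((n + j).factorial : ℝ)) := by
  apply Summable.of_norm_bounded (Real.summable_pow_div_factorial |u|)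
  intro j
  rw [norm_div, norm_pow, Real.norm_eq_abs, Real.norm_eq_abs, abs_of_nonneg (by positivity : (0:ℝ) ≤ (((n+j).factorial : ℕ) : ℝ))]
  apply div_le_div_of_nonneg_left ?_ ?_ ?_
  · positivity
  · positivity
  · exact_mod_cast Nat.factorial_le (Nat.le_add_left j n)

lemma parts (u : ℝ) (n : ℕ) :
    ((n:ℝ)+1) * ∫ x in (0:ℝ)..1, (1-x)^n * Real.exp (u*x)
      = 1 + u * ∫ x in (0:ℝ)..1, (1-x)^(n+1) * Real.exp (u*x) := by
  have H := intervalIntegral.integral_mul_deriv_eq_deriv_mul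
    (u := fun x : ℝ => -(1-x)^(n+1)) (u' := fun x : ℝ => ((n:ℝ)+1) * (1-x)^n)
    (v := fun x : ℝ => Real.exp (u*x)) (v' := fun x : ℝ => u * Real.exp (u*x))
    (a := 0) (b := 1)
    (fun x _ => by
      have h1 : HasDerivAt (fun x : ℝ => (1-x)) (-1) x := by
        simpa using (hasDerivAt_id x).const_sub 1
      have := (h1.pow (n+1)).neg
      refine this.congr_deriv ?_
      push_cast
      ring)
    (fun x _ => by
      have := (Real.hasDerivAt_exp (u*x)).comp x ((hasDerivAt_id x).const_mul u)
      simpa [mul_comm, Function.comp_def] using this)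
    (by apply Continuous.intervalIntegrable; continuity)
    (by apply Continuous.intervalIntegrable; continuity)
  have e1 : (∫ x in (0:ℝ)..1, -(1-x)^(n+1) * (u * Real.exp (u*x)))
      = -u * ∫ x in (0:ℝ)..1, (1-x)^(n+1) * Real.exp (u*x) := by
    rw [← intervalIntegral.integral_const_mul]
    apply intervalIntegral.integral_congr
    intro x _
    ring
  rw [e1] at H
  have e2 : (∫ x in (0:ℝ)..1, ((n:ℝ)+1) * (1-x)^n * Real.exp (u*x))
      = ((n:ℝ)+1) * ∫ x in (0:ℝ)..1, (1-x)^n * Real.exp (u*x) := by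
    rw [← intervalIntegral.integral_const_mul]
    apply intervalIntegral.integral_congr
    intro x _
    ring
  rw [e2] at H
  norm_num [Real.exp_zero] at H
  linarith

lemma taylor_id (u : ℝ) : ∀ n : ℕ, Real.exp u
    = (∑ k ∈ Finset.range (n+1), u^k / (k.factorial : ℝ))
      + u^(n+1) / (n.factorial : ℝ) * ∫ x in (0:ℝ)..1, (1-x)^n * Real.exp (u*x) := by
  intro n
  induction n with
  | zero =>
    simp only [pow_one, Finset.range_one, Finset.sum_singleton, pow_zero, Nat.factorial_zero,
      Nat.cast_one, div_one]
    rcases eq_or_ne u 0 with hu | hu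
    · simp [hu]
    · have hI : (∫ x in (0:ℝ)..1, (1-x)^0 * Real.exp (u*x)) = (Real.exp u - 1)/u := by
        simp only [pow_zero, one_mul]
        rw [integral_comp_mul_left (f := Real.exp) hu]
        simp only [mul_zero, mul_one, integral_exp, Real.exp_zero, smul_eq_mul]
        field_simp
      simp only [pow_zero] at hI ⊢
      rw [hI]
      field_simp
      simp
      ring
  | succ n ih =>
    rw [ih]
    have hrec := parts u n
    have hJ : (∫ x in (0:ℝ)..1, (1-x)^n * Real.exp (u*x))
        = (1 + u * ∫ x in (0:ℝ)..1, (1-x)^(n+1) * Real.exp (u*x)) / ((n:ℝ)+1) := by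
      rw [eq_div_iff (by positivity)]
      linarith
    rw [hJ]
    rw [Finset.sum_range_succ _ (n+1)]
    have hfac : ((n+1).factorial : ℝ) = ((n:ℝ)+1) * (n.factorial : ℝ) := by
      rw [Nat.factorial_succ]; push_cast; ring
    have hn1 : ((n:ℝ)+1) ≠ 0 := by positivity
    have hf : ((n.factorial : ℕ) : ℝ) ≠ 0 := by positivity
    generalize (∫ x in (0:ℝ)..1, (1-x)^(n+1) * Real.exp (u*x)) = J
    rw [hfac]
    field_simp
    ring

lemma key_id {u : ℝ} (hu : 0 < u) (n : ℕ) :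
    (∑' j : ℕ, u^j / (((n+1) + j).factorial : ℝ))
      = (1/(n.factorial : ℝ)) * ∫ x in (0:ℝ)..1, (1-x)^n * Real.exp (u*x) := by
  have hsum := summable_aux u (n+1)
  have h1 : u^(n+1) * ∑' j : ℕ, u^j / (((n+1) + j).factorial : ℝ)
      = ∑' j : ℕ, u^((n+1)+j) / (((n+1)+j).factorial : ℝ) := by
    rw [← tsum_mul_left]
    congr 1
    funext j
    rw [pow_add]
    ring
  have h2 : (∑ k ∈ Finset.range (n+1), u^k / (k.factorial : ℝ))
      + (∑' j : ℕ, u^(j+(n+1)) / ((j+(n+1)).factorial : ℝ)) = Real.exp u := by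
    rw [Real.exp_eq_exp_ℝ, NormedSpace.exp_eq_tsum_div]
    exact Summable.sum_add_tsum_nat_add (n+1) (Real.summable_pow_div_factorial u)
  have h3 : (∑' j : ℕ, u^((n+1)+j) / (((n+1)+j).factorial : ℝ))
      = (∑' j : ℕ, u^(j+(n+1)) / ((j+(n+1)).factorial : ℝ)) := by
    congr 1; funext j; rw [add_comm]
  have := taylor_id u n
  have hun : u^(n+1) ≠ 0 := by positivity
  have hf : ((n.factorial : ℕ) : ℝ) ≠ 0 := by positivity
  have h4 : (∑' j : ℕ, u^(j+(n+1)) / ((j+(n+1)).factorial : ℝ))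
      = Real.exp u - ∑ k ∈ Finset.range (n+1), u^k / (k.factorial : ℝ) := by linarith
  have h5 : Real.exp u - (∑ k ∈ Finset.range (n+1), u^k / (k.factorial : ℝ))
      = u^(n+1) / (n.factorial : ℝ) * ∫ x in (0:ℝ)..1, (1-x)^n * Real.exp (u*x) := by
    linarith [taylor_id u n]
  have h6 : u^(n+1) * ∑' j : ℕ, u^j / (((n+1) + j).factorial : ℝ)
      = u^(n+1) * ((1/(n.factorial : ℝ)) * ∫ x in (0:ℝ)..1, (1-x)^n * Real.exp (u*x)) := by
    rw [h1, h3, h4, h5]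
    ring
  exact mul_left_cancel₀ hun h6


lemma log_bound {t : ℝ} (h0 : 0 ≤ t) (h1 : t < 1) : |Real.log (1 - t) + t| ≤ t^2 / (1 - t) := by
  have h1t : 0 < 1 - t := by linarith
  have hub : Real.log (1 - t) ≤ -t := by
    have := Real.log_le_sub_one_of_pos h1t; linarith
  have hlb : -(t/(1-t)) ≤ Real.log (1 - t) := by
    have h2 : Real.log (1-t)⁻¹ ≤ (1-t)⁻¹ - 1 := Real.log_le_sub_one_of_pos (by positivity)
    rw [Real.log_inv] at h2
    have h3 : (1-t)⁻¹ - 1 = t/(1-t) := by field_simp; ring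
    linarith [h3 ▸ h2]
  have key : t - t/(1-t) = -(t^2/(1-t)) := by field_simp; ring
  rw [abs_le]
  constructor
  · linarith
  · have : t^2/(1-t) ≥ 0 := by positivity
    linarith

set_option maxHeartbeats 2000000 in
lemma dct_limit (ta tb : ℝ) (h : ta < tb) :
    Tendsto (fun n : ℕ =>
      ((n:ℝ)+1) ^ ((2:ℝ)/3) *
        ∫ x in (0:ℝ)..1, (1-x)^n *
          Real.exp ((((n:ℝ)+1) * ((1 + ta * ((n:ℝ)+1) ^ (-(1:ℝ)/3)) * (1 - tb * ((n:ℝ)+1) ^ (-(1:ℝ)/3)))) * x))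
      atTop (𝓝 (1/(tb - ta))) := by
  have hc : 0 < tb - ta := sub_pos.2 h
  set c : ℝ := tb - ta with hc_def
  set X : ℕ → ℝ := fun n => (n:ℝ)+1 with hX_def
  have hXpos : ∀ n, 0 < X n := fun n => by positivity
  set s : ℕ → ℝ := fun n => (X n) ^ ((1:ℝ)/3) with hs_def
  have hspos : ∀ n, 0 < s n := fun n => Real.rpow_pos_of_pos (hXpos n) _
  have hs3 : ∀ n, (s n)^3 = X n := by
    intro n
    rw [hs_def]
    rw [← Real.rpow_natCast ((X n) ^ ((1:ℝ)/3)) 3, ← Real.rpow_mul (hXpos n).le]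
    norm_num
  have hP : ∀ n, (X n) ^ ((2:ℝ)/3) = (s n)^2 := by
    intro n
    rw [hs_def, ← Real.rpow_natCast ((X n) ^ ((1:ℝ)/3)) 2, ← Real.rpow_mul (hXpos n).le]
    norm_num
  have hinv : ∀ n, (X n) ^ (-(1:ℝ)/3) = (s n)⁻¹ := by
    intro n
    rw [hs_def, neg_div, Real.rpow_neg (hXpos n).le]
  set u : ℕ → ℝ := fun n => X n * ((1 + ta * (X n) ^ (-(1:ℝ)/3)) * (1 - tb * (X n) ^ (-(1:ℝ)/3))) with hu_def
  set eps : ℕ → ℝ := fun n => (1 - ta*tb*(s n)) / (s n)^2 with heps_def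
  -- key algebraic identity
  have keyalg : ∀ n (y : ℝ), (u n - (n:ℝ)) * (y / (s n)^2) = -c*y + eps n * y := by
    intro n y
    have hsne : s n ≠ 0 := (hspos n).ne'
    have hn : (n:ℝ) = (s n)^3 - 1 := by rw [hs3]; simp [hX_def]
    have hun : u n = (s n)^3 * ((1 + ta * (s n)⁻¹) * (1 - tb * (s n)⁻¹)) := by
      rw [hu_def]
      simp only [hinv]
      rw [← hs3 n]
    rw [hun, hn, heps_def]
    field_simp
    ring
  -- limits of auxiliary sequences
  have hX_top : Tendsto X atTop atTop :=
    tendsto_atTop_add_const_right _ _ tendsto_natCast_atTop_atTop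
  have hs_top : Tendsto s atTop atTop :=
    (tendsto_rpow_atTop (by norm_num : (0:ℝ) < 1/3)).comp hX_top
  have hs2_top : Tendsto (fun n => (s n)^2) atTop atTop := hs_top.atTop_mul_atTop₀ hs_top |>.congr (by intro n; ring)
  have hsinv : Tendsto (fun n => (s n)⁻¹) atTop (𝓝 0) := tendsto_inv_atTop_zero.comp hs_top
  have heps0 : Tendsto eps atTop (𝓝 0) := by
    have : eps = fun n => (s n)⁻¹ * (s n)⁻¹ - ta*tb*(s n)⁻¹ := by
      funext n
      have hsne : s n ≠ 0 := (hspos n).ne'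
      rw [heps_def]
      field_simp
    rw [this]
    have h1 : Tendsto (fun n => (s n)⁻¹ * (s n)⁻¹) atTop (𝓝 0) := by
      simpa using hsinv.mul hsinv
    have h2 : Tendsto (fun n => ta*tb*(s n)⁻¹) atTop (𝓝 0) := by
      simpa using hsinv.const_mul (ta*tb)
    simpa using h1.sub h2
  -- the indicator functions
  set F : ℕ → ℝ → ℝ := fun n =>
    (Set.Ioc (0:ℝ) ((s n)^2)).indicator
      (fun y => (1 - y/(s n)^2)^n * Real.exp (u n * (y/(s n)^2))) with hF_def
  -- Step A : change of variables
  have stepA : ∀ n, (X n) ^ ((2:ℝ)/3) * (∫ x in (0:ℝ)..1, (1-x)^n * Real.exp (u n * x))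
      = ∫ y in Set.Ioi (0:ℝ), F n y := by
    intro n
    have hPpos : 0 < (s n)^2 := by positivity
    rw [hF_def]
    rw [MeasureTheory.integral_indicator measurableSet_Ioc]
    rw [MeasureTheory.Measure.restrict_restrict measurableSet_Ioc]
    rw [Set.inter_eq_self_of_subset_left Set.Ioc_subset_Ioi_self]
    rw [← intervalIntegral.integral_of_le hPpos.le]
    rw [intervalIntegral.integral_comp_div (f := fun x => (1-x)^n * Real.exp (u n * x))
      (a := 0) (b := (s n)^2) hPpos.ne']
    rw [zero_div, div_self hPpos.ne', smul_eq_mul, hP]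
  -- Step C : value of limit integral
  have stepC : (∫ y in Set.Ioi (0:ℝ), Real.exp (-c*y)) = 1/c := by
    have := MeasureTheory.integral_Ioi_of_hasDerivAt_of_tendsto
      (f := fun y : ℝ => -Real.exp (-c*y)/c) (f' := fun y : ℝ => Real.exp (-c*y)) (a := 0)
      (((Real.continuous_exp.comp (continuous_const.mul continuous_id)).neg.div_const c).continuousWithinAt)
      (fun x _ => by
        have h1 : HasDerivAt (fun y : ℝ => -c*y) (-c) x := by
          simpa using (hasDerivAt_id x).const_mul (-c)
        have h2 := (Real.hasDerivAt_exp (-c*x)).comp x h1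
        have h3 := (h2.neg).div_const c
        refine h3.congr_deriv ?_
        field_simp)
      (exp_neg_integrableOn_Ioi 0 hc)
      (by
        have h0 : Tendsto (fun y : ℝ => Real.exp (-c*y)) atTop (𝓝 0) :=
          Real.tendsto_exp_atBot.comp ((tendsto_const_mul_atBot_of_neg (neg_lt_zero.2 hc)).2 tendsto_id)
        have h4 := (h0.neg).div_const c
        simpa using h4)
    rw [this]
    norm_num [Real.exp_zero]
    rw [neg_div, neg_neg, one_div]
  -- Step B : dominated convergence
  have hmeas : ∀ᶠ n in atTop, AEStronglyMeasurable (F n) (volume.restrict (Set.Ioi (0:ℝ))) := by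
    apply Filter.Eventually.of_forall
    intro n
    apply AEStronglyMeasurable.indicator _ measurableSet_Ioc
    apply Continuous.aestronglyMeasurable
    continuity
  have hbound : ∀ᶠ n in atTop, ∀ᵐ y ∂(volume.restrict (Set.Ioi (0:ℝ))),
      ‖F n y‖ ≤ Real.exp (-(c/2) * y) := by
    have hev : ∀ᶠ n in atTop, eps n < c/2 := heps0.eventually_lt_const (by positivity)
    filter_upwards [hev] with n hn
    rw [ae_restrict_iff' measurableSet_Ioi]
    apply Filter.Eventually.of_forall
    intro y hy
    have hy0 : 0 < y := hy
    simp only [hF_def]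
    by_cases hmem : y ∈ Set.Ioc (0:ℝ) ((s n)^2)
    · rw [Set.indicator_of_mem hmem]
      set t := y / (s n)^2 with ht_def
      have hPp : 0 < (s n)^2 := by positivity
      have ht0 : 0 < t := div_pos hy0 hPp
      have ht1 : t ≤ 1 := (div_le_one hPp).2 hmem.2
      have h1t : 0 ≤ 1 - t := by linarith
      have step1 : (1 - t)^n ≤ Real.exp (-t)^n := by
        apply pow_le_pow_left₀ h1t
        linarith [Real.add_one_le_exp (-t)]
      have step2 : Real.exp (-t)^n = Real.exp (-(n:ℝ) * t) := by
        rw [← Real.exp_nat_mul]; congr 1; ring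
      have hval : (1 - t)^n * Real.exp (u n * t) ≤ Real.exp ((u n - (n:ℝ))*t) := by
        calc (1 - t)^n * Real.exp (u n * t)
            ≤ Real.exp (-(n:ℝ)*t) * Real.exp (u n * t) := by
              rw [← step2]; exact mul_le_mul_of_nonneg_right step1 (Real.exp_pos _).le
          _ = Real.exp ((u n - (n:ℝ))*t) := by rw [← Real.exp_add]; congr 1; ring
      rw [Real.norm_eq_abs, abs_of_nonneg (mul_nonneg (pow_nonneg h1t n) (Real.exp_pos _).le)]
      refine hval.trans ?_
      rw [ht_def, keyalg n y, Real.exp_le_exp]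
      have hmul : eps n * y ≤ (c/2) * y := mul_le_mul_of_nonneg_right hn.le hy0.le
      linarith
    · rw [Set.indicator_of_notMem hmem]
      simp only [norm_zero]
      positivity
  have hlim : ∀ᵐ y ∂(volume.restrict (Set.Ioi (0:ℝ))),
      Tendsto (fun n => F n y) atTop (𝓝 (Real.exp (-c*y))) := by
    rw [ae_restrict_iff' measurableSet_Ioi]
    apply Filter.Eventually.of_forall
    intro y hy
    have hy0 : 0 < y := hy
    have hev : ∀ᶠ n in atTop, y < (s n)^2 ∧ (2*y) ≤ (s n)^2 :=
      (hs2_top.eventually_gt_atTop y).and (hs2_top.eventually_ge_atTop (2*y))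
    have hA : Tendsto (fun n : ℕ => (n:ℝ) * (Real.log (1 - y/(s n)^2) + y/(s n)^2)) atTop (𝓝 0) := by
      have hg : Tendsto (fun n : ℕ => 2*y^2*(s n)⁻¹) atTop (𝓝 0) := by
        simpa using hsinv.const_mul (2*y^2)
      apply squeeze_zero_norm' _ hg
      · filter_upwards [hev] with n hn
        have hPp : 0 < (s n)^2 := by positivity
        set t := y / (s n)^2 with ht_def
        have ht0 : 0 < t := div_pos hy0 hPp
        have hthalf : t ≤ 1/2 := by
          rw [ht_def, div_le_iff₀ hPp]; linarith [hn.2]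
        have ht1 : t < 1 := by linarith
        have h1t : 0 < 1 - t := by linarith
        have hns : (n:ℝ) ≤ (s n)^3 := by rw [hs3]; simp [hX_def]
        calc ‖(n:ℝ) * (Real.log (1-t) + t)‖ = (n:ℝ) * |Real.log (1-t) + t| := by
              rw [Real.norm_eq_abs, abs_mul, abs_of_nonneg (Nat.cast_nonneg n)]
          _ ≤ (n:ℝ) * (t^2/(1-t)) :=
              mul_le_mul_of_nonneg_left (log_bound ht0.le ht1) (Nat.cast_nonneg n)
          _ ≤ (n:ℝ) * (2*t^2) := by
              have : t^2/(1-t) ≤ 2*t^2 := by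
                rw [div_le_iff₀ h1t]; nlinarith [sq_nonneg t]
              exact mul_le_mul_of_nonneg_left this (Nat.cast_nonneg n)
          _ ≤ (s n)^3 * (2*t^2) := mul_le_mul_of_nonneg_right hns (by positivity)
          _ = 2*y^2*(s n)⁻¹ := by
              rw [ht_def]
              have hsne : s n ≠ 0 := (hspos n).ne'
              field_simp
    have hB : Tendsto (fun n : ℕ => -c*y + eps n * y) atTop (𝓝 (-c*y)) := by
      have := (heps0.mul_const y).const_add (-c*y)
      simpa using this
    have hE : Tendsto (fun n : ℕ => (n:ℝ)*(Real.log (1 - y/(s n)^2) + y/(s n)^2) + (-c*y + eps n * y))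
        atTop (𝓝 (-c*y)) := by
      simpa using hA.add hB
    have hexp := (Real.continuous_exp.tendsto _).comp hE
    apply Tendsto.congr' _ hexp
    filter_upwards [hev] with n hn
    have hPp : 0 < (s n)^2 := by positivity
    have hmem : y ∈ Set.Ioc (0:ℝ) ((s n)^2) := ⟨hy0, (hn.1).le⟩
    have ht1 : y / (s n)^2 < 1 := (div_lt_one hPp).2 hn.1
    have h1t : 0 < 1 - y / (s n)^2 := by linarith
    simp only [hF_def, Function.comp_apply]
    rw [Set.indicator_of_mem hmem, ← keyalg n y,
      show (n:ℝ)*(Real.log (1 - y/(s n)^2) + y/(s n)^2) + ((u n - (n:ℝ))*(y/(s n)^2))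
        = (n:ℝ)*Real.log (1 - y/(s n)^2) + u n * (y/(s n)^2) by ring,
      Real.exp_add, Real.exp_nat_mul, Real.exp_log h1t]
  have hbint : Integrable (fun y => Real.exp (-(c/2) * y)) (volume.restrict (Set.Ioi (0:ℝ))) :=
    exp_neg_integrableOn_Ioi 0 (by positivity)
  have hdct := MeasureTheory.tendsto_integral_filter_of_dominated_convergence
    (μ := volume.restrict (Set.Ioi (0:ℝ))) (F := F) (f := fun y => Real.exp (-c*y))
    (bound := fun y => Real.exp (-(c/2) * y)) hmeas hbound hbint hlim
  rw [show (∫ y in Set.Ioi (0:ℝ), Real.exp (-c*y)) = 1/c from stepC] at hdct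
  exact Tendsto.congr (fun n => (stepA n).symm) hdct


lemma prefactor (n : ℕ) :
    Real.sqrt (2*π) * ((n:ℝ)+1)^((1:ℝ)/6) * ((((n:ℝ)+1))/Real.exp 1)^(n+1) * (1/(n.factorial:ℝ))
      = (Real.sqrt π / Stirling.stirlingSeq (n+1)) * ((n:ℝ)+1)^((2:ℝ)/3) := by
  have hX : (0:ℝ) < (n:ℝ)+1 := by positivity
  have hS : Stirling.stirlingSeq (n+1)
      = (((n+1).factorial : ℕ) : ℝ) / (Real.sqrt (2*((n:ℝ)+1)) * (((n:ℝ)+1)/Real.exp 1)^(n+1)) := by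
    rw [Stirling.stirlingSeq]
    push_cast
    ring_nf
  have hfac : (((n+1).factorial : ℕ) : ℝ) = ((n:ℝ)+1) * ((n.factorial : ℕ) : ℝ) := by
    rw [Nat.factorial_succ]; push_cast; ring
  have hsq2X : Real.sqrt (2*((n:ℝ)+1)) = Real.sqrt 2 * ((n:ℝ)+1)^((1:ℝ)/2) := by
    rw [Real.sqrt_mul (by norm_num : (0:ℝ) ≤ 2), Real.sqrt_eq_rpow ((n:ℝ)+1)]
  have hsq2pi : Real.sqrt (2*π) = Real.sqrt 2 * Real.sqrt π := Real.sqrt_mul (by norm_num) π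
  have hrpow : ((n:ℝ)+1)^((1:ℝ)/2) * ((n:ℝ)+1)^((2:ℝ)/3) = ((n:ℝ)+1)^((1:ℝ)/6) * ((n:ℝ)+1) := by
    rw [← Real.rpow_add hX, show (1:ℝ)/2 + 2/3 = 1/6 + 1 by norm_num, Real.rpow_add hX,
      Real.rpow_one]
  have hpow_ne : ((((n:ℝ)+1))/Real.exp 1)^(n+1) ≠ 0 := by positivity
  have hfac_ne : ((n.factorial : ℕ) : ℝ) ≠ 0 := by positivity
  have hsq2X_ne : Real.sqrt (2*((n:ℝ)+1)) ≠ 0 := by positivity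
  have hSne : Stirling.stirlingSeq (n+1) ≠ 0 := by
    rw [hS]; positivity
  have key : Real.sqrt (2*π) * ((n:ℝ)+1)^((1:ℝ)/6) * ((n:ℝ)+1)
      = Real.sqrt π * Real.sqrt (2*((n:ℝ)+1)) * ((n:ℝ)+1)^((2:ℝ)/3) := by
    rw [hsq2pi, hsq2X]
    calc Real.sqrt 2 * Real.sqrt π * ((n:ℝ)+1)^((1:ℝ)/6) * ((n:ℝ)+1)
        = Real.sqrt 2 * Real.sqrt π * (((n:ℝ)+1)^((1:ℝ)/6) * ((n:ℝ)+1)) := by ring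
      _ = Real.sqrt 2 * Real.sqrt π * (((n:ℝ)+1)^((1:ℝ)/2) * ((n:ℝ)+1)^((2:ℝ)/3)) := by
          rw [hrpow]
      _ = Real.sqrt π * (Real.sqrt 2 * ((n:ℝ)+1)^((1:ℝ)/2)) * ((n:ℝ)+1)^((2:ℝ)/3) := by ring
  rw [div_mul_eq_mul_div, eq_div_iff hSne, hS, hfac]
  generalize hgen : (((n:ℝ)+1)/Real.exp 1)^(n+1) = C at hpow_ne ⊢
  generalize hgen2 : ((n.factorial:ℕ):ℝ) = Fc at hfac_ne ⊢
  calc Real.sqrt (2*π) * ((n:ℝ)+1)^((1:ℝ)/6) * C * (1/Fc)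
      * ((((n:ℝ)+1) * Fc) / (Real.sqrt (2*((n:ℝ)+1)) * C))
      = (Real.sqrt (2*π) * ((n:ℝ)+1)^((1:ℝ)/6) * ((n:ℝ)+1))
        * (C / C) * (Fc / Fc) / Real.sqrt (2*((n:ℝ)+1)) := by
        ring
    _ = (Real.sqrt (2*π) * ((n:ℝ)+1)^((1:ℝ)/6) * ((n:ℝ)+1)) / Real.sqrt (2*((n:ℝ)+1)) := by
        rw [div_self hpow_ne, div_self hfac_ne]; ring
    _ = (Real.sqrt π * Real.sqrt (2*((n:ℝ)+1)) * ((n:ℝ)+1)^((2:ℝ)/3)) / Real.sqrt (2*((n:ℝ)+1)) := by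
        rw [key]
    _ = Real.sqrt π * ((n:ℝ)+1)^((2:ℝ)/3)
        * (Real.sqrt (2*((n:ℝ)+1)) / Real.sqrt (2*((n:ℝ)+1))) := by ring
    _ = Real.sqrt π * ((n:ℝ)+1)^((2:ℝ)/3) := by rw [div_self hsq2X_ne]; ring


/-- Asymptotics of the moment matrix entries (Lemma 2.2): with
`a_n = √(2n)·(1 + ã·n^{−1/3})`, `b_n = √(2n)·(1 − b̃·n^{−1/3})`, `u_n = a_n·b_n/2`
for fixed reals `ã < b̃`, one has
`lim_{n→∞} √(2π) · n^{1/6} · (n/e)^n · ∑_{j≥0} u_n^j/(n+j)! = 1/(b̃ − ã)`. -/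
theorem moment_matrix_asymptotics (ta tb : ℝ) (h : ta < tb) :
    Tendsto (fun n : ℕ =>
        Real.sqrt (2 * π) * (n : ℝ) ^ ((1 : ℝ) / 6) * ((n : ℝ) / Real.exp 1) ^ n *
          ∑' j : ℕ,
            (Real.sqrt (2 * n) * (1 + ta * (n : ℝ) ^ (-(1 : ℝ) / 3)) *
                (Real.sqrt (2 * n) * (1 - tb * (n : ℝ) ^ (-(1 : ℝ) / 3))) / 2) ^ j /
              ((n + j).factorial : ℝ))
      atTop (nhds (1 / (tb - ta))) := by
  rw [← Filter.tendsto_add_atTop_iff_nat 1]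
  have hrinv : Tendsto (fun n : ℕ => ((n:ℝ)+1) ^ (-(1:ℝ)/3)) atTop (𝓝 0) := by
    have h1 : Tendsto (fun x : ℝ => x ^ (-((1:ℝ)/3))) atTop (𝓝 0) :=
      tendsto_rpow_neg_atTop (by norm_num)
    have h2 : Tendsto (fun n : ℕ => (n:ℝ)+1) atTop atTop :=
      tendsto_atTop_add_const_right _ _ tendsto_natCast_atTop_atTop
    have := h1.comp h2
    simpa [neg_div, Function.comp_def] using this
  have hg1 : Tendsto (fun n : ℕ => 1 + ta * ((n:ℝ)+1)^(-(1:ℝ)/3)) atTop (𝓝 1) := by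
    have := (hrinv.const_mul ta).const_add 1
    simpa using this
  have hg2 : Tendsto (fun n : ℕ => 1 - tb * ((n:ℝ)+1)^(-(1:ℝ)/3)) atTop (𝓝 1) := by
    have := (hrinv.const_mul tb).const_sub 1
    simpa using this
  have hpos : ∀ᶠ n : ℕ in atTop,
      0 < 1 + ta * ((n:ℝ)+1)^(-(1:ℝ)/3) ∧ 0 < 1 - tb * ((n:ℝ)+1)^(-(1:ℝ)/3) :=
    (Filter.Tendsto.eventually_const_lt zero_lt_one hg1).and
      (Filter.Tendsto.eventually_const_lt zero_lt_one hg2)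
  have hπ : Real.sqrt π ≠ 0 := Real.sqrt_ne_zero'.2 Real.pi_pos
  have hstir0 : Tendsto (fun n : ℕ => Stirling.stirlingSeq (n+1)) atTop (𝓝 (Real.sqrt π)) :=
    Stirling.tendsto_stirlingSeq_sqrt_pi.comp (tendsto_add_atTop_nat 1)
  have hstir : Tendsto (fun n : ℕ => Real.sqrt π / Stirling.stirlingSeq (n+1)) atTop (𝓝 1) := by
    have := (tendsto_const_nhds (x := Real.sqrt π) (f := atTop (α := ℕ))).div hstir0 hπ
    simpa [div_self hπ, Pi.div_def] using this
  have hmain := hstir.mul (dct_limit ta tb h)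
  rw [one_mul] at hmain
  apply Tendsto.congr' _ hmain
  filter_upwards [hpos] with n hn
  obtain ⟨h1, h2⟩ := hn
  have hX : (0:ℝ) < (n:ℝ)+1 := by positivity
  have hu : 0 < ((n:ℝ)+1) * ((1 + ta * ((n:ℝ)+1)^(-(1:ℝ)/3)) * (1 - tb * ((n:ℝ)+1)^(-(1:ℝ)/3))) :=
    mul_pos hX (mul_pos h1 h2)
  push_cast
  have h2X : Real.sqrt (2*((n:ℝ)+1)) * Real.sqrt (2*((n:ℝ)+1)) = 2*((n:ℝ)+1) :=
    Real.mul_self_sqrt (by positivity)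
  have hbase : (Real.sqrt (2*((n:ℝ)+1)) * (1 + ta * ((n:ℝ)+1)^(-(1:ℝ)/3)) *
      (Real.sqrt (2*((n:ℝ)+1)) * (1 - tb * ((n:ℝ)+1)^(-(1:ℝ)/3))) / 2)
      = ((n:ℝ)+1) * ((1 + ta * ((n:ℝ)+1)^(-(1:ℝ)/3)) * (1 - tb * ((n:ℝ)+1)^(-(1:ℝ)/3))) := by
    calc Real.sqrt (2*((n:ℝ)+1)) * (1 + ta * ((n:ℝ)+1)^(-(1:ℝ)/3)) *
        (Real.sqrt (2*((n:ℝ)+1)) * (1 - tb * ((n:ℝ)+1)^(-(1:ℝ)/3))) / 2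
        = (Real.sqrt (2*((n:ℝ)+1)) * Real.sqrt (2*((n:ℝ)+1))) *
          ((1 + ta * ((n:ℝ)+1)^(-(1:ℝ)/3)) * (1 - tb * ((n:ℝ)+1)^(-(1:ℝ)/3))) / 2 := by ring
      _ = ((n:ℝ)+1) * ((1 + ta * ((n:ℝ)+1)^(-(1:ℝ)/3)) * (1 - tb * ((n:ℝ)+1)^(-(1:ℝ)/3))) := by
          rw [h2X]; ring
  rw [hbase, key_id hu n]
  linear_combination (-∫ x in (0:ℝ)..1, (1-x)^n *
    Real.exp ((((n:ℝ)+1) * ((1 + ta * ((n:ℝ)+1)^(-(1:ℝ)/3)) * (1 - tb * ((n:ℝ)+1)^(-(1:ℝ)/3)))) * x))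
    * (prefactor n)
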